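/- Let c ≥ 0 and let f : ℝ → ℝ be differentiable with f(x) ≥ 0 for all x and f'(x) ≤ c·f(x) for all x. Then for every real number r, f(r) ≤ (1 + c) · ∫_{r−1}^{r} f(x) dx. -/

import Mathlib

/-- If `f` is differentiable, nonnegative, and satisfies `f' ≤ c * f` with `c ≥ 0`, then
`f(r) ≤ (1 + c) * ∫_{r-1}^r f`. -/
theorem value_le_integral_of_deriv_le (c : ℝ) (hc : 0 ≤ c) (f : ℝ → ℝ)
    (hf : Differentiable ℝ f) (hf0 : ∀ x, 0 ≤ f x)
    (hf' : ∀ x, deriv f x ≤ c * f x) :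
    ∀ r : ℝ, f r ≤ (1 + c) * ∫ x in (r - 1)..r, f x := by
  intro r
  have hcont : Continuous f := hf.continuous
  have hint : ∀ a b : ℝ, IntervalIntegrable f MeasureTheory.volume a b :=
    fun a b => hcont.intervalIntegrable a b
  set I : ℝ := ∫ x in (r - 1)..r, f x with hI
  set g : ℝ → ℝ := fun y => f y - c * ∫ t in (r - 1)..y, f t with hg
  have hgd : ∀ y, HasDerivAt g (deriv f y - c * f y) y := by
    intro y
    exact (hf y).hasDerivAt.sub
      (((intervalIntegral.integral_hasDerivAt_right (hint _ _)
        (hcont.stronglyMeasurableAtFilter _ _) hcont.continuousAt)).const_mul c)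
  have hanti : Antitone g := by
    apply antitone_of_deriv_nonpos
    · exact fun y => (hgd y).differentiableAt
    · intro y
      rw [(hgd y).deriv]
      linarith [hf' y]
  have key : ∀ x ∈ Set.Icc (r - 1) r, f r ≤ f x + c * I := by
    intro x hx
    have h1 : g r ≤ g x := hanti hx.2
    have h2 : 0 ≤ ∫ t in (r - 1)..x, f t :=
      intervalIntegral.integral_nonneg hx.1 (fun u _ => hf0 u)
    have h3 : 0 ≤ c * ∫ t in (r - 1)..x, f t := mul_nonneg hc h2
    simp only [hg] at h1
    linarith
  have h1 : f r = ∫ _ in (r - 1)..r, f r := by simp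
  have h2 : (∫ _ in (r - 1)..r, f r) ≤ ∫ x in (r - 1)..r, (f x + c * I) := by
    apply intervalIntegral.integral_mono_on (by linarith)
      intervalIntegrable_const ((hint _ _).add intervalIntegrable_const) key
  have h3 : (∫ x in (r - 1)..r, (f x + c * I)) = I + c * I := by
    rw [intervalIntegral.integral_add (hint _ _) intervalIntegrable_const]
    simp [hI]
  rw [h1]
  calc (∫ _ in (r - 1)..r, f r) ≤ I + c * I := by rw [← h3]; exact h2
    _ = (1 + c) * I := by ring
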